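/- arXiv:2008.11117 — 5 statements merged into one kernel-verified Lean document; each statement's English description precedes it below -/
import Mathlib

section
/- Let f : ℝⁿ → ℝ be differentiable with L-Lipschitz gradient, let g ∈ ℝⁿ with ‖g‖_∞ ≤ η, let Δ₁, …, Δₙ be independent Bernoulli variables with P[Δᵢ=1] = |gᵢ|/η, and define the random point X = x − α Σᵢ sgn(gᵢ) Δᵢ eᶦ. Then E[f(X)] ≤ f(x) + (Lα²)/(2η) · ‖g‖₁ − (α/η) ⟨g, ∇f(x)⟩. -/
open scoped RealInnerProductSpace

noncomputable def bernWeight {n : ℕ} (p : Fin n → ℝ) (s : Fin n → Bool) : ℝ :=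
  ∏ i, if s i then p i else 1 - p i

noncomputable def bernExp {n : ℕ} (p : Fin n → ℝ) (h : (Fin n → Bool) → ℝ) : ℝ :=
  ∑ s : Fin n → Bool, bernWeight p s * h s

/-- One step of SMGD from `x` with step `α`, gradient estimate `g` and Bernoulli
outcomes `s`. -/
noncomputable def smgdStep {n : ℕ} (x : EuclideanSpace ℝ (Fin n)) (α : ℝ)
    (g : Fin n → ℝ) (s : Fin n → Bool) : EuclideanSpace ℝ (Fin n) :=
  x - α • ∑ i, (Real.sign (g i) * (if s i then 1 else 0)) • EuclideanSpace.single i (1 : ℝ)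

/-! ### Auxiliary lemmas -/

lemma Real.sign_mul_abs' (r : ℝ) : Real.sign r * |r| = r := by
  rcases lt_trichotomy r 0 with h | h | h
  · rw [Real.sign_of_neg h, abs_of_neg h]; ring
  · simp [h]
  · rw [Real.sign_of_pos h, abs_of_pos h]; ring

lemma Real.sign_sq_le_one (r : ℝ) : Real.sign r ^ 2 ≤ 1 := by
  rcases Real.sign_apply_eq r with h | h | h <;> rw [h] <;> norm_num

lemma descent {E : Type*} [NormedAddCommGroup E] [InnerProductSpace ℝ E] [CompleteSpace E]
    (f : E → ℝ) (L : ℝ) (hL : 0 ≤ L) (hdiff : Differentiable ℝ f)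
    (hlip : ∀ x y : E, ‖gradient f x - gradient f y‖ ≤ L * ‖x - y‖) (x v : E) :
    f (x + v) ≤ f x + ⟪gradient f x, v⟫ + L / 2 * ‖v‖ ^ 2 := by
  have hgc : Continuous (gradient f) := by
    have : LipschitzWith (Real.toNNReal L) (gradient f) := by
      apply LipschitzWith.of_dist_le_mul
      intro a b
      rw [dist_eq_norm, dist_eq_norm]
      calc ‖gradient f a - gradient f b‖ ≤ L * ‖a - b‖ := hlip a b
        _ = (Real.toNNReal L : ℝ) * ‖a - b‖ := by rw [Real.coe_toNNReal L hL]
    exact this.continuous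
  have key : ∀ t : ℝ, HasDerivAt (fun t : ℝ => f (x + t • v))
      ⟪gradient f (x + t • v), v⟫ t := by
    intro t
    have h1 : HasDerivAt (fun t : ℝ => x + t • v) v t := by
      simpa using ((hasDerivAt_id t).smul_const v).const_add x
    have h2 := (hdiff (x + t • v)).hasGradientAt.hasFDerivAt
    have := h2.comp_hasDerivAt t h1
    simpa [InnerProductSpace.toDual_apply_apply, Function.comp_def] using this
  have hcont : Continuous fun t : ℝ => ⟪gradient f (x + t • v), v⟫ := by
    exact Continuous.inner (hgc.comp (by continuity)) continuous_const
  have hFTC : f (x + v) - f x = ∫ t in (0:ℝ)..1, ⟪gradient f (x + t • v), v⟫ := by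
    have := intervalIntegral.integral_eq_sub_of_hasDerivAt
      (fun t _ => key t) (hcont.intervalIntegrable 0 1)
    simpa using this.symm
  have hbound : ∀ t ∈ Set.Icc (0:ℝ) 1,
      ⟪gradient f (x + t • v), v⟫ ≤ ⟪gradient f x, v⟫ + L * t * ‖v‖ ^ 2 := by
    intro t ht
    have h1 : ⟪gradient f (x + t • v) - gradient f x, v⟫
        ≤ ‖gradient f (x + t • v) - gradient f x‖ * ‖v‖ := real_inner_le_norm _ _
    have h2 : ‖gradient f (x + t • v) - gradient f x‖ ≤ L * (t * ‖v‖) := by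
      have := hlip (x + t • v) x
      simpa [norm_smul, abs_of_nonneg ht.1, mul_assoc] using this
    have h3 : ⟪gradient f (x + t • v) - gradient f x, v⟫ ≤ L * t * ‖v‖ ^ 2 := by
      calc ⟪gradient f (x + t • v) - gradient f x, v⟫
          ≤ ‖gradient f (x + t • v) - gradient f x‖ * ‖v‖ := h1
        _ ≤ L * (t * ‖v‖) * ‖v‖ := by
            apply mul_le_mul_of_nonneg_right h2 (norm_nonneg v)
        _ = L * t * ‖v‖ ^ 2 := by ring
    have := inner_sub_left (𝕜 := ℝ) (gradient f (x + t • v)) (gradient f x) v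
    linarith [h3, this]
  have hmono : (∫ t in (0:ℝ)..1, ⟪gradient f (x + t • v), v⟫)
      ≤ ∫ t in (0:ℝ)..1, (⟪gradient f x, v⟫ + L * t * ‖v‖ ^ 2) := by
    apply intervalIntegral.integral_mono_on (by norm_num)
      (hcont.intervalIntegrable 0 1)
      ((by continuity : Continuous fun t : ℝ => ⟪gradient f x, v⟫ + L * t * ‖v‖ ^ 2).intervalIntegrable 0 1)
    intro t ht; exact hbound t ht
  have hval : (∫ t in (0:ℝ)..1, (⟪gradient f x, v⟫ + L * t * ‖v‖ ^ 2))
      = ⟪gradient f x, v⟫ + L / 2 * ‖v‖ ^ 2 := by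
    have hrw : (fun t : ℝ => ⟪gradient f x, v⟫ + L * t * ‖v‖ ^ 2)
        = fun t : ℝ => ⟪gradient f x, v⟫ + (L * ‖v‖ ^ 2) * t := by
      funext t; ring
    rw [show (∫ t in (0:ℝ)..1, (⟪gradient f x, v⟫ + L * t * ‖v‖ ^ 2))
        = ∫ t in (0:ℝ)..1, (⟪gradient f x, v⟫ + (L * ‖v‖ ^ 2) * t) from by rw [hrw],
      intervalIntegral.integral_add intervalIntegrable_const
        (intervalIntegral.intervalIntegrable_id.const_mul _),
      intervalIntegral.integral_const_mul, integral_id]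
    simp; ring
  linarith [hFTC, hmono, hval]

lemma sum_prod_bool {n : ℕ} (f : Fin n → Bool → ℝ) :
    ∑ s : Fin n → Bool, ∏ i, f i (s i) = ∏ i, (f i false + f i true) := by
  have h := Finset.prod_univ_sum (fun _ : Fin n => (Finset.univ : Finset Bool)) f
  rw [Fintype.piFinset_univ] at h
  rw [← h]
  apply Finset.prod_congr rfl
  intro i _
  simp [Fintype.sum_bool, add_comm]

lemma sum_bernWeight {n : ℕ} (p : Fin n → ℝ) : ∑ s : Fin n → Bool, bernWeight p s = 1 := by
  have h := sum_prod_bool (fun i (b : Bool) => if b then p i else 1 - p i)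
  calc ∑ s : Fin n → Bool, bernWeight p s
      = ∑ s : Fin n → Bool, ∏ i, (fun i (b : Bool) => if b then p i else 1 - p i) i (s i) := rfl
    _ = ∏ i, ((fun i (b : Bool) => if b then p i else 1 - p i) i false
          + (fun i (b : Bool) => if b then p i else 1 - p i) i true) := h
    _ = 1 := by simp

lemma bernExp_ind {n : ℕ} (p : Fin n → ℝ) (i : Fin n) :
    ∑ s : Fin n → Bool, bernWeight p s * (if s i then 1 else 0) = p i := by
  set F : Fin n → Bool → ℝ := fun j (b : Bool) => (if b then p j else 1 - p j) *
      (if j = i then (if b then (1:ℝ) else 0) else 1) with hF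
  have key : ∀ s : Fin n → Bool, bernWeight p s * (if s i then (1:ℝ) else 0)
      = ∏ j, F j (s j) := by
    intro s
    simp only [bernWeight, hF]
    rw [Finset.prod_mul_distrib]
    congr 1
    rw [Finset.prod_ite_eq' Finset.univ i (fun j => if s j then (1:ℝ) else 0)]
    simp
  rw [Finset.sum_congr rfl (fun s _ => key s)]
  rw [show (∑ s : Fin n → Bool, ∏ j, F j (s j)) = ∏ j, (F j false + F j true) from
    sum_prod_bool F]
  have h2 : ∀ j : Fin n, F j false + F j true = if j = i then p j else 1 := by
    intro j
    by_cases h : j = i <;> simp [hF, h] <;> ring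
  rw [Finset.prod_congr rfl (fun j _ => h2 j), Finset.prod_ite_eq' Finset.univ i p]
  simp

lemma bernExp_affine {n : ℕ} (p : Fin n → ℝ) (a : ℝ) (c : Fin n → ℝ) :
    bernExp p (fun s => a + ∑ i, c i * (if s i then 1 else 0))
      = a + ∑ i, c i * p i := by
  unfold bernExp
  have : ∀ s : Fin n → Bool, bernWeight p s * (a + ∑ i, c i * (if s i then 1 else 0))
      = bernWeight p s * a + ∑ i, c i * (bernWeight p s * (if s i then 1 else 0)) := by
    intro s
    rw [mul_add, Finset.mul_sum]
    congr 1
    apply Finset.sum_congr rfl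
    intro i _
    ring
  rw [Finset.sum_congr rfl (fun s _ => this s), Finset.sum_add_distrib,
    ← Finset.sum_mul, sum_bernWeight, one_mul, Finset.sum_comm]
  congr 1
  apply Finset.sum_congr rfl
  intro i _
  rw [← Finset.mul_sum, bernExp_ind]

theorem stmt_4 (n : ℕ) (f : EuclideanSpace ℝ (Fin n) → ℝ) (L α η : ℝ)
    (hL : 0 ≤ L) (hα : 0 < α) (hη : 0 < η)
    (hdiff : Differentiable ℝ f)
    (hlip : ∀ x y : EuclideanSpace ℝ (Fin n), ‖gradient f x - gradient f y‖ ≤ L * ‖x - y‖)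
    (x : EuclideanSpace ℝ (Fin n)) (g : Fin n → ℝ) (hg : ∀ i, |g i| ≤ η) :
    bernExp (fun i => |g i| / η) (fun s => f (smgdStep x α g s))
      ≤ f x + L * α ^ 2 / (2 * η) * (∑ i, |g i|)
          - (α / η) * ∑ i, g i * gradient f x i := by
  set G := gradient f x with hG
  set p : Fin n → ℝ := fun i => |g i| / η with hp
  set c : Fin n → ℝ := fun i => L / 2 * α ^ 2 - α * (Real.sign (g i) * G i) with hc
  -- coordinates of the step vector
  have hcoord : ∀ (s : Fin n → Bool) (j : Fin n),
      (∑ i, (Real.sign (g i) * (if s i then 1 else 0)) • EuclideanSpace.single i (1 : ℝ)) j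
        = Real.sign (g j) * (if s j then 1 else 0) := by
    intro s j
    rw [WithLp.ofLp_sum, Finset.sum_apply]
    rw [Finset.sum_eq_single j
      (fun b _ hb => by by_cases h : s b <;> simp [h, EuclideanSpace.single_apply, Ne.symm hb])
      (fun h => absurd (Finset.mem_univ j) h)]
    by_cases h : s j <;> simp [h, EuclideanSpace.single_apply]
  -- pointwise bound
  have hpt : ∀ s : Fin n → Bool,
      f (smgdStep x α g s) ≤ f x + ∑ i, c i * (if s i then 1 else 0) := by
    intro s
    set w : EuclideanSpace ℝ (Fin n) :=
      ∑ i, (Real.sign (g i) * (if s i then 1 else 0)) • EuclideanSpace.single i (1 : ℝ) with hw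
    have hstep : smgdStep x α g s = x + (-(α • w)) := by
      simp [smgdStep, hw, sub_eq_add_neg]
    have hdesc := descent f L hL hdiff hlip x (-(α • w))
    rw [← hstep] at hdesc
    have hinner : ⟪G, -(α • w)⟫ = -(α * ∑ i, G i * (Real.sign (g i) * (if s i then 1 else 0))) := by
      rw [inner_neg_right, real_inner_smul_right]
      congr 2
      rw [show ⟪G, w⟫ = ∑ i, G i * w i from by
        simp [PiLp.inner_apply, RCLike.inner_apply, mul_comm]]
      apply Finset.sum_congr rfl
      intro i _
      rw [show w i = Real.sign (g i) * (if s i then 1 else 0) from hcoord s i]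
    have hnorm : ‖-(α • w)‖ ^ 2 ≤ α ^ 2 * ∑ i, (if s i then (1:ℝ) else 0) := by
      rw [norm_neg, norm_smul]
      have hw2 : ‖w‖ ^ 2 = ∑ i, (Real.sign (g i) * (if s i then 1 else 0)) ^ 2 := by
        rw [EuclideanSpace.norm_eq, Real.sq_sqrt (by positivity)]
        apply Finset.sum_congr rfl
        intro i _
        rw [show w i = Real.sign (g i) * (if s i then 1 else 0) from hcoord s i,
          Real.norm_eq_abs, sq_abs]
      have hsumle : ∑ i, (Real.sign (g i) * (if s i then (1:ℝ) else 0)) ^ 2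
          ≤ ∑ i, (if s i then (1:ℝ) else 0) := by
        apply Finset.sum_le_sum
        intro i _
        by_cases h : s i
        · simpa [h] using Real.sign_sq_le_one (g i)
        · simp [h]
      calc (‖α‖ * ‖w‖) ^ 2 = α ^ 2 * ‖w‖ ^ 2 := by
            rw [mul_pow]; congr 1; rw [Real.norm_eq_abs, sq_abs]
        _ ≤ α ^ 2 * ∑ i, (if s i then (1:ℝ) else 0) := by
            rw [hw2]; exact mul_le_mul_of_nonneg_left hsumle (sq_nonneg α)
    have h1 : f (smgdStep x α g s)
        ≤ f x - α * (∑ i, G i * (Real.sign (g i) * (if s i then 1 else 0)))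
          + L / 2 * (α ^ 2 * ∑ i, (if s i then (1:ℝ) else 0)) := by
      have := mul_le_mul_of_nonneg_left hnorm (by linarith : (0:ℝ) ≤ L / 2)
      rw [hinner] at hdesc
      linarith
    have hsum : (∑ i, c i * (if s i then (1:ℝ) else 0))
        = L / 2 * (α ^ 2 * ∑ i, (if s i then (1:ℝ) else 0))
          - α * (∑ i, G i * (Real.sign (g i) * (if s i then 1 else 0))) := by
      have heach : ∀ i, c i * (if s i then (1:ℝ) else 0)
          = L / 2 * (α ^ 2 * (if s i then (1:ℝ) else 0))
            - α * (G i * (Real.sign (g i) * (if s i then 1 else 0))) := by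
        intro i
        by_cases h : s i <;> simp only [hc, h, if_true, if_false, mul_zero, mul_one] <;> ring
      rw [Finset.sum_congr rfl (fun i _ => heach i), Finset.sum_sub_distrib,
        ← Finset.mul_sum, ← Finset.mul_sum, ← Finset.mul_sum]
    linarith [h1, hsum]
  -- monotonicity of bernExp
  have hwpos : ∀ s : Fin n → Bool, 0 ≤ bernWeight p s := by
    intro s
    apply Finset.prod_nonneg
    intro i _
    by_cases h : s i
    · simp only [h, if_true, hp]
      positivity
    · have h1 : |g i| / η ≤ 1 := (div_le_one hη).2 (hg i)
      simp only [hp]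
      rw [if_neg h]
      linarith
  have hmono : bernExp p (fun s => f (smgdStep x α g s))
      ≤ bernExp p (fun s => f x + ∑ i, c i * (if s i then 1 else 0)) := by
    apply Finset.sum_le_sum
    intro s _
    exact mul_le_mul_of_nonneg_left (hpt s) (hwpos s)
  rw [bernExp_affine] at hmono
  refine le_trans hmono (le_of_eq ?_)
  rw [show f x + L * α ^ 2 / (2 * η) * (∑ i, |g i|) - (α / η) * ∑ i, g i * G i
      = f x + ((∑ i, L * α ^ 2 / (2 * η) * |g i|) - ∑ i, (α / η) * (g i * G i)) from by
    rw [← Finset.mul_sum, ← Finset.mul_sum]; ring]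
  congr 1
  rw [← Finset.sum_sub_distrib]
  apply Finset.sum_congr rfl
  intro i _
  have hsign : Real.sign (g i) * |g i| = g i := Real.sign_mul_abs' (g i)
  have e : Real.sign (g i) * G i * |g i| = g i * G i := by
    have h2 : Real.sign (g i) * G i * |g i| = (Real.sign (g i) * |g i|) * G i := by ring
    rw [h2, hsign]
  simp only [hc, hp]
  have hη' : η ≠ 0 := ne_of_gt hη
  field_simp
  linear_combination (-2) * e
end

section
/- Let f = (1/m) Σ_{i=1}^m fᶦ with each fᶦ : ℝⁿ → ℝ differentiable, and for 1 ≤ k ≤ m let the mini-batch estimator of size k be G_k(x) = (1/k) Σ_{i ∈ A} ∇fᶦ(x) where A is a uniformly random k-element subset of {1,…,m}. Then for any norm ‖·‖ on ℝⁿ, any x, and 2 ≤ k ≤ m: E[‖G_k(x)‖] ≤ E[‖G_{k−1}(x)‖]. -/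
theorem stmt_5 (n m : ℕ) (hm : 2 ≤ m) (F : Fin m → EuclideanSpace ℝ (Fin n) → ℝ)
    (hF : ∀ i, Differentiable ℝ (F i))
    (N : EuclideanSpace ℝ (Fin n) → ℝ)
    (hN_add : ∀ a b, N (a + b) ≤ N a + N b)
    (hN_smul : ∀ (c : ℝ) a, N (c • a) = |c| * N a)
    (hN_nonneg : ∀ a, 0 ≤ N a)
    (x : EuclideanSpace ℝ (Fin n)) (k : ℕ) (hk : 2 ≤ k) (hkm : k ≤ m) :
    (1 / (m.choose k : ℝ)) *
        ∑ A ∈ (Finset.univ : Finset (Fin m)).powersetCard k,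
          N ((1 / (k : ℝ)) • ∑ i ∈ A, gradient (F i) x)
      ≤ (1 / (m.choose (k - 1) : ℝ)) *
          ∑ B ∈ (Finset.univ : Finset (Fin m)).powersetCard (k - 1),
            N ((1 / ((k : ℝ) - 1)) • ∑ i ∈ B, gradient (F i) x) := by
  classical
  set g : Fin m → EuclideanSpace ℝ (Fin n) := fun i => gradient (F i) x with hg
  set h : Finset (Fin m) → ℝ := fun B => N ((1 / ((k : ℝ) - 1)) • ∑ i ∈ B, g i) with hh
  have hkR : (2:ℝ) ≤ (k:ℝ) := by exact_mod_cast hk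
  have hk0 : (k:ℝ) ≠ 0 := by linarith
  have hk1 : (k:ℝ) - 1 ≠ 0 := by linarith
  have hN0 : N 0 = 0 := by
    have := hN_smul 0 0; simpa using this
  have hNsum : ∀ (s : Finset (Fin m)) (f : Fin m → EuclideanSpace ℝ (Fin n)),
      N (∑ i ∈ s, f i) ≤ ∑ i ∈ s, N (f i) := by
    intro s f
    induction s using Finset.cons_induction with
    | empty => simp [hN0]
    | cons a s ha ih =>
      rw [Finset.sum_cons, Finset.sum_cons]
      exact le_trans (hN_add _ _) (by linarith)
  -- pointwise bound
  have key : ∀ A ∈ (Finset.univ : Finset (Fin m)).powersetCard k,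
      N ((1/(k:ℝ)) • ∑ i ∈ A, g i) ≤ (1/(k:ℝ)) * ∑ j ∈ A, h (A.erase j) := by
    intro A hA
    have hcard : A.card = k := (Finset.mem_powersetCard.mp hA).2
    have hsum : ∑ j ∈ A, ((1/((k:ℝ)-1)) • ∑ i ∈ A.erase j, g i) = ∑ i ∈ A, g i := by
      rw [Finset.sum_congr rfl (fun j hj => by rw [Finset.sum_erase_eq_sub hj])]
      rw [← Finset.smul_sum, Finset.sum_sub_distrib, Finset.sum_const, hcard]
      have h2 : k • (∑ i ∈ A, g i) - ∑ i ∈ A, g i = ((k:ℝ)-1) • ∑ i ∈ A, g i := by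
        rw [sub_smul, one_smul, ← Nat.cast_smul_eq_nsmul ℝ]
      rw [h2, smul_smul, one_div, inv_mul_cancel₀ hk1, one_smul]
    calc N ((1/(k:ℝ)) • ∑ i ∈ A, g i)
        = |1/(k:ℝ)| * N (∑ i ∈ A, g i) := hN_smul _ _
      _ = (1/(k:ℝ)) * N (∑ j ∈ A, ((1/((k:ℝ)-1)) • ∑ i ∈ A.erase j, g i)) := by
          rw [hsum, abs_of_pos (by positivity)]
      _ ≤ (1/(k:ℝ)) * ∑ j ∈ A, h (A.erase j) :=
          mul_le_mul_of_nonneg_left (hNsum _ _) (by positivity)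
  -- reindexing
  have reindex : ∑ A ∈ (Finset.univ : Finset (Fin m)).powersetCard k, ∑ j ∈ A, h (A.erase j)
      = ∑ B ∈ (Finset.univ : Finset (Fin m)).powersetCard (k-1), ((m - (k-1) : ℕ):ℝ) * h B := by
    rw [Finset.sum_sigma' ((Finset.univ : Finset (Fin m)).powersetCard k)
      (fun A => A) (fun A j => h (A.erase j))]
    have step : ∑ p ∈ ((Finset.univ : Finset (Fin m)).powersetCard k).sigma (fun A => A),
        h (p.1.erase p.2)
        = ∑ p ∈ ((Finset.univ : Finset (Fin m)).powersetCard (k-1)).sigma (fun B => Bᶜ), h p.1 := by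
      refine Finset.sum_nbij' (fun p => ⟨p.1.erase p.2, p.2⟩) (fun p => ⟨insert p.2 p.1, p.2⟩)
        ?_ ?_ ?_ ?_ ?_
      · rintro ⟨A, j⟩ hp
        rw [Finset.mem_sigma] at hp ⊢
        obtain ⟨hA, hj⟩ := hp
        have hcard : A.card = k := (Finset.mem_powersetCard.mp hA).2
        refine ⟨Finset.mem_powersetCard.mpr ⟨Finset.subset_univ _, ?_⟩, ?_⟩
        · rw [Finset.card_erase_of_mem hj, hcard]
        · simp [Finset.mem_erase]
      · rintro ⟨B, j⟩ hp
        rw [Finset.mem_sigma] at hp ⊢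
        obtain ⟨hB, hj⟩ := hp
        have hcard : B.card = k - 1 := (Finset.mem_powersetCard.mp hB).2
        have hjB : j ∉ B := by simpa using hj
        refine ⟨Finset.mem_powersetCard.mpr ⟨Finset.subset_univ _, ?_⟩, Finset.mem_insert_self _ _⟩
        rw [Finset.card_insert_of_notMem hjB, hcard]
        omega
      · rintro ⟨A, j⟩ hp
        rw [Finset.mem_sigma] at hp
        simp [Finset.insert_erase hp.2]
      · rintro ⟨B, j⟩ hp
        rw [Finset.mem_sigma] at hp
        have hjB : j ∉ B := by simpa using hp.2
        simp [Finset.erase_insert hjB]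
      · rintro ⟨A, j⟩ hp; rfl
    rw [step, Finset.sum_sigma]
    refine Finset.sum_congr rfl fun B hB => ?_
    show (∑ _s ∈ Bᶜ, h B) = _
    rw [Finset.sum_const, Finset.card_compl, (Finset.mem_powersetCard.mp hB).2,
      nsmul_eq_mul]
    simp
  -- combine
  have hCk : 0 < (m.choose k : ℝ) := by exact_mod_cast Nat.choose_pos hkm
  have hCk1 : 0 < (m.choose (k-1) : ℝ) := by exact_mod_cast Nat.choose_pos (by omega : k - 1 ≤ m)
  have hchoose : (m.choose k : ℝ) * k = (m.choose (k-1) : ℝ) * ((m - (k-1) : ℕ):ℝ) := by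
    have := Nat.choose_succ_right_eq m (k-1)
    rw [show k - 1 + 1 = k by omega] at this
    exact_mod_cast this
  have main : ∑ A ∈ (Finset.univ : Finset (Fin m)).powersetCard k,
      N ((1 / (k : ℝ)) • ∑ i ∈ A, g i)
      ≤ (1/(k:ℝ)) * (((m - (k-1) : ℕ):ℝ) *
        ∑ B ∈ (Finset.univ : Finset (Fin m)).powersetCard (k-1), h B) := by
    calc ∑ A ∈ (Finset.univ : Finset (Fin m)).powersetCard k,
        N ((1 / (k : ℝ)) • ∑ i ∈ A, g i)
        ≤ ∑ A ∈ (Finset.univ : Finset (Fin m)).powersetCard k,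
          ((1/(k:ℝ)) * ∑ j ∈ A, h (A.erase j)) := Finset.sum_le_sum key
      _ = (1/(k:ℝ)) * ∑ A ∈ (Finset.univ : Finset (Fin m)).powersetCard k,
          ∑ j ∈ A, h (A.erase j) := (Finset.mul_sum _ _ _).symm
      _ = (1/(k:ℝ)) * ∑ B ∈ (Finset.univ : Finset (Fin m)).powersetCard (k-1),
          ((m - (k-1) : ℕ):ℝ) * h B := by rw [reindex]
      _ = _ := by rw [← Finset.mul_sum]
  have hcoef : (1/(m.choose k:ℝ)) * ((1/(k:ℝ)) * ((m-(k-1):ℕ):ℝ)) = 1/(m.choose (k-1):ℝ) := by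
    field_simp
    linarith [hchoose]
  calc (1 / (m.choose k : ℝ)) * ∑ A ∈ (Finset.univ : Finset (Fin m)).powersetCard k,
        N ((1 / (k : ℝ)) • ∑ i ∈ A, g i)
      ≤ (1 / (m.choose k : ℝ)) * ((1/(k:ℝ)) * (((m - (k-1) : ℕ):ℝ) *
        ∑ B ∈ (Finset.univ : Finset (Fin m)).powersetCard (k-1), h B)) :=
        mul_le_mul_of_nonneg_left main (by positivity)
    _ = (1 / (m.choose (k - 1) : ℝ)) *
        ∑ B ∈ (Finset.univ : Finset (Fin m)).powersetCard (k-1), h B := by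
        rw [← hcoef]; ring
end

section
/- For vectors v₁, …, v_m in a normed space and 2 ≤ k ≤ m, the average over all size-k subsets A of ‖(1/k) Σ_{i∈A} vᵢ‖ is at most the average over all size-(k−1) subsets B of ‖(1/(k−1)) Σ_{i∈B} vᵢ‖. -/
open Finset

lemma aux_card_superset {α : Type*} [DecidableEq α] (s B : Finset α) (hB : B ⊆ s) (k : ℕ)
    (hk : B.card ≤ k) :
    ((s.powersetCard k).filter (fun A => B ⊆ A)).card
      = (s.card - B.card).choose (k - B.card) := by
  have hbij : ((s.powersetCard k).filter (fun A => B ⊆ A)).card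
      = ((s \ B).powersetCard (k - B.card)).card := by
    apply Finset.card_bij (fun A _ => A \ B)
    · intro A hA
      simp only [Finset.mem_filter, Finset.mem_powersetCard] at hA ⊢
      obtain ⟨⟨hAs, hAcard⟩, hBA⟩ := hA
      exact ⟨Finset.sdiff_subset_sdiff hAs (le_refl B), by rw [Finset.card_sdiff_of_subset hBA, hAcard]⟩
    · intro A hA A' hA' h
      simp only [Finset.mem_filter, Finset.mem_powersetCard] at hA hA'
      have := congrArg (fun t => t ∪ B) h
      simpa [Finset.sdiff_union_of_subset hA.2, Finset.sdiff_union_of_subset hA'.2] using this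
    · intro C hC
      simp only [Finset.mem_powersetCard] at hC
      obtain ⟨hCs, hCcard⟩ := hC
      have hdisj : Disjoint C B := Finset.disjoint_of_subset_left hCs Finset.sdiff_disjoint
      refine ⟨C ∪ B, ?_, ?_⟩
      · simp only [Finset.mem_filter, Finset.mem_powersetCard]
        refine ⟨⟨Finset.union_subset (hCs.trans Finset.sdiff_subset) hB, ?_⟩,
          Finset.subset_union_right⟩
        rw [Finset.card_union_of_disjoint hdisj, hCcard]
        omega
      · rw [Finset.union_sdiff_right, Finset.sdiff_eq_self_of_disjoint hdisj]
  rw [hbij, Finset.card_powersetCard, Finset.card_sdiff_of_subset hB]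

theorem stmt_7 (m : ℕ) (E : Type*) [NormedAddCommGroup E] [NormedSpace ℝ E]
    (v : Fin m → E) (k : ℕ) (hk : 2 ≤ k) (hkm : k ≤ m) :
    (1 / (m.choose k : ℝ)) *
        ∑ A ∈ (Finset.univ : Finset (Fin m)).powersetCard k,
          ‖(1 / (k : ℝ)) • ∑ i ∈ A, v i‖
      ≤ (1 / (m.choose (k - 1) : ℝ)) *
          ∑ B ∈ (Finset.univ : Finset (Fin m)).powersetCard (k - 1),
            ‖(1 / ((k : ℝ) - 1)) • ∑ i ∈ B, v i‖ := by
  have hk0 : (0:ℝ) < (k:ℝ) := by positivity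
  have hk2 : (2:ℝ) ≤ (k:ℝ) := by exact_mod_cast hk
  have hk1 : (0:ℝ) < (k:ℝ) - 1 := by linarith
  have hcast : ((k - 1 : ℕ) : ℝ) = (k:ℝ) - 1 := by
    have h1 : 1 ≤ k := by omega
    push_cast [h1]; ring
  set g : Finset (Fin m) → ℝ := fun B => ‖(1 / ((k : ℝ) - 1)) • ∑ i ∈ B, v i‖ with hg
  -- Step 1: pointwise bound
  have step1 : ∀ A ∈ (Finset.univ : Finset (Fin m)).powersetCard k,
      ‖(1 / (k : ℝ)) • ∑ i ∈ A, v i‖ ≤ (1 / (k:ℝ)) * ∑ B ∈ A.powersetCard (k-1), g B := by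
    intro A hA
    rw [Finset.mem_powersetCard] at hA
    obtain ⟨-, hAcard⟩ := hA
    have key : ∑ B ∈ A.powersetCard (k-1), ∑ i ∈ B, v i
        = ((k:ℝ)-1) • ∑ i ∈ A, v i := by
      have h1 : ∀ B ∈ A.powersetCard (k-1), ∑ i ∈ B, v i
          = ∑ i ∈ A, if i ∈ B then v i else 0 := by
        intro B hB
        rw [Finset.mem_powersetCard] at hB
        rw [Finset.sum_ite_mem, Finset.inter_comm, Finset.inter_eq_left.mpr hB.1]
      rw [Finset.sum_congr rfl h1, Finset.sum_comm, Finset.smul_sum]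
      refine Finset.sum_congr rfl fun i hi => ?_
      rw [← Finset.sum_filter, Finset.sum_const]
      have hcard : ((A.powersetCard (k-1)).filter (fun B => i ∈ B)).card = k - 1 := by
        have h2 : ((A.powersetCard (k-1)).filter (fun B => i ∈ B))
            = ((A.powersetCard (k-1)).filter (fun B => {i} ⊆ B)) := by
          simp [Finset.singleton_subset_iff]
        rw [h2, aux_card_superset A {i} (Finset.singleton_subset_iff.mpr hi) (k-1)
          (by simp only [Finset.card_singleton]; omega)]
        simp only [Finset.card_singleton, hAcard]
        have e1 : k - 1 - 1 = k - 2 := by omega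
        rw [e1]
        have e2 : (k-1).choose (k-2) = (k-1).choose 1 := by
          rw [← Nat.choose_symm (by omega : 1 ≤ k - 1)]
          congr 1
        rw [e2, Nat.choose_one_right]
      rw [hcard, ← Nat.cast_smul_eq_nsmul ℝ, hcast]
    have hSA : (1 / ((k:ℝ)-1)) • ∑ B ∈ A.powersetCard (k-1), ∑ i ∈ B, v i
        = ∑ i ∈ A, v i := by
      rw [key, smul_smul, one_div, inv_mul_cancel₀ (ne_of_gt hk1), one_smul]
    rw [norm_smul]
    have h0 : ‖(1/(k:ℝ))‖ = 1/(k:ℝ) := by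
      rw [Real.norm_eq_abs, abs_of_pos (by positivity)]
    rw [h0]
    refine mul_le_mul_of_nonneg_left ?_ (by positivity)
    calc ‖∑ i ∈ A, v i‖
        = ‖(1/((k:ℝ)-1)) • ∑ B ∈ A.powersetCard (k-1), ∑ i ∈ B, v i‖ := by rw [hSA]
      _ = ‖∑ B ∈ A.powersetCard (k-1), (1/((k:ℝ)-1)) • ∑ i ∈ B, v i‖ := by
          rw [Finset.smul_sum]
      _ ≤ ∑ B ∈ A.powersetCard (k-1), g B := norm_sum_le _ _
  -- Step 2: double counting
  have step2 : ∑ A ∈ (Finset.univ : Finset (Fin m)).powersetCard k,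
        ∑ B ∈ A.powersetCard (k-1), g B
      = ((m - k + 1 : ℕ) : ℝ) * ∑ B ∈ (Finset.univ : Finset (Fin m)).powersetCard (k-1), g B := by
    have h1 : ∀ A ∈ (Finset.univ : Finset (Fin m)).powersetCard k,
        ∑ B ∈ A.powersetCard (k-1), g B
          = ∑ B ∈ (Finset.univ : Finset (Fin m)).powersetCard (k-1),
              if B ⊆ A then g B else 0 := by
      intro A hA
      rw [← Finset.sum_filter]
      congr 1
      ext B
      simp only [Finset.mem_filter, Finset.mem_powersetCard, Finset.subset_univ, true_and]
      tauto
    rw [Finset.sum_congr rfl h1, Finset.sum_comm, Finset.mul_sum]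
    refine Finset.sum_congr rfl fun B hB => ?_
    rw [Finset.mem_powersetCard_univ] at hB
    rw [← Finset.sum_filter, Finset.sum_const]
    have hcard : (((Finset.univ : Finset (Fin m)).powersetCard k).filter
        (fun A => B ⊆ A)).card = m - k + 1 := by
      rw [aux_card_superset Finset.univ B (Finset.subset_univ B) k (by omega)]
      rw [hB, Finset.card_univ, Fintype.card_fin]
      have e1 : k - (k-1) = 1 := by omega
      have e2 : m - (k-1) = m - k + 1 := by omega
      rw [e1, e2, Nat.choose_one_right]
    rw [hcard, nsmul_eq_mul]
  -- Combine
  have hsum_nonneg : (0:ℝ) ≤ ∑ B ∈ (Finset.univ : Finset (Fin m)).powersetCard (k-1), g B :=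
    Finset.sum_nonneg fun _ _ => norm_nonneg _
  have hA_le : ∑ A ∈ (Finset.univ : Finset (Fin m)).powersetCard k,
      ‖(1 / (k : ℝ)) • ∑ i ∈ A, v i‖
      ≤ (1/(k:ℝ)) * (((m - k + 1 : ℕ):ℝ) *
          ∑ B ∈ (Finset.univ : Finset (Fin m)).powersetCard (k-1), g B) := by
    calc ∑ A ∈ (Finset.univ : Finset (Fin m)).powersetCard k,
          ‖(1 / (k : ℝ)) • ∑ i ∈ A, v i‖
        ≤ ∑ A ∈ (Finset.univ : Finset (Fin m)).powersetCard k,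
            (1/(k:ℝ)) * ∑ B ∈ A.powersetCard (k-1), g B := Finset.sum_le_sum step1
      _ = (1/(k:ℝ)) * ∑ A ∈ (Finset.univ : Finset (Fin m)).powersetCard k,
            ∑ B ∈ A.powersetCard (k-1), g B := by rw [Finset.mul_sum]
      _ = _ := by rw [step2]
  have hc1 : (0:ℝ) < (m.choose k : ℝ) := by
    exact_mod_cast Nat.choose_pos hkm
  have hc2 : (0:ℝ) < (m.choose (k-1) : ℝ) := by
    exact_mod_cast Nat.choose_pos (by omega : k - 1 ≤ m)
  have hnat : m.choose k * k = m.choose (k-1) * (m - k + 1) := by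
    have h := Nat.choose_succ_right_eq m (k-1)
    have e1 : k - 1 + 1 = k := by omega
    have e2 : m - (k-1) = m - k + 1 := by omega
    rw [e1, e2] at h
    exact h
  have hnatR : (m.choose k : ℝ) * (k:ℝ) = (m.choose (k-1):ℝ) * ((m - k + 1 : ℕ):ℝ) := by
    exact_mod_cast hnat
  have hfinal : (1/(m.choose k:ℝ)) * ((1/(k:ℝ)) * (((m - k + 1 : ℕ):ℝ) *
        ∑ B ∈ (Finset.univ : Finset (Fin m)).powersetCard (k-1), g B))
      = (1/(m.choose (k-1):ℝ)) *
        ∑ B ∈ (Finset.univ : Finset (Fin m)).powersetCard (k-1), g B := by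
    have hmk : ((m - k + 1 : ℕ):ℝ) = (m:ℝ) - (k:ℝ) + 1 := by
      push_cast [hkm]; ring
    field_simp
    linear_combination (-(∑ B ∈ (Finset.univ : Finset (Fin m)).powersetCard (k-1), g B)) * hnatR
  calc (1 / (m.choose k : ℝ)) *
        ∑ A ∈ (Finset.univ : Finset (Fin m)).powersetCard k,
          ‖(1 / (k : ℝ)) • ∑ i ∈ A, v i‖
      ≤ (1/(m.choose k:ℝ)) * ((1/(k:ℝ)) * (((m - k + 1 : ℕ):ℝ) *
          ∑ B ∈ (Finset.univ : Finset (Fin m)).powersetCard (k-1), g B)) :=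
        mul_le_mul_of_nonneg_left hA_le (by positivity)
    _ = _ := hfinal
end

section
/- Let f : ℝⁿ → ℝ be differentiable, μ-strongly convex with L-Lipschitz gradient and minimizer x*. Let ε > 0 and α < (4εμ/(L²n))^{1/2}. If f(x) − f(x*) > ε, then ‖∇f(x)‖₂ > Lα√n/2. -/
open scoped RealInnerProductSpace

lemma stmt_12_aux (G N R μ ε : ℝ) (hG : 0 ≤ G) (hμ : 0 < μ) (hR : 0 < R) (hε : 0 < ε)
    (h1 : ε < G * N) (h2 : μ * N ^ 2 ≤ G * N) (h3 : R ^ 2 < ε * μ) : R < G := by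
  rcases le_or_gt (μ * N) R with h | h
  · nlinarith [mul_lt_mul_of_pos_right h1 hμ, mul_le_mul_of_nonneg_left h hG, sq_nonneg R]
  · have hN0 : 0 < N := by nlinarith
    have h4 : μ * N ≤ G := by
      have : (μ * N) * N ≤ G * N := by nlinarith
      exact le_of_mul_le_mul_right this hN0
    linarith

theorem stmt_12 (n : ℕ) (hn : 1 ≤ n) (f : EuclideanSpace ℝ (Fin n) → ℝ) (μ L α ε : ℝ)
    (hμ : 0 < μ) (hL : 0 < L) (hα : 0 < α) (hε : 0 < ε)
    (hdiff : Differentiable ℝ f)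
    (hconv : ∀ x y : EuclideanSpace ℝ (Fin n),
      ⟪gradient f x - gradient f y, x - y⟫ ≥ μ * ‖x - y‖ ^ 2)
    (hlip : ∀ x y : EuclideanSpace ℝ (Fin n), ‖gradient f x - gradient f y‖ ≤ L * ‖x - y‖)
    (xstar : EuclideanSpace ℝ (Fin n)) (hmin : ∀ y, f xstar ≤ f y)
    (hαsmall : α < Real.sqrt (4 * ε * μ / (L ^ 2 * n)))
    (x : EuclideanSpace ℝ (Fin n)) (hx : f x - f xstar > ε) :
    ‖gradient f x‖ > L * α * Real.sqrt n / 2 := by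
  have hn' : (0:ℝ) < n := by exact_mod_cast hn
  have hsqn : (0:ℝ) < Real.sqrt n := Real.sqrt_pos.mpr hn'
  have hsqn2 : Real.sqrt n ^ 2 = n := Real.sq_sqrt hn'.le
  -- α^2 < 4εμ/(L²n)
  have hα2 : α ^ 2 < 4 * ε * μ / (L ^ 2 * n) := (Real.lt_sqrt hα.le).mp hαsmall
  have hα2' : L ^ 2 * α ^ 2 * n < 4 * ε * μ := by
    rw [lt_div_iff₀ (by positivity : (0:ℝ) < L ^ 2 * n)] at hα2
    nlinarith [hα2]
  -- gradient at xstar is zero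
  have hgrad0 : gradient f xstar = 0 := by
    have hloc : IsLocalMin f xstar := Filter.Eventually.of_forall hmin
    have := hloc.fderiv_eq_zero
    simp [gradient, this]
  -- fderiv applied = inner with gradient
  have hfd : ∀ p v, fderiv ℝ f p v = ⟪gradient f p, v⟫ := by
    intro p v
    have : fderiv ℝ f p = InnerProductSpace.toDual ℝ _ (gradient f p) := by
      simp [gradient]
    rw [this]; rfl
  set g := gradient f x with hg
  set R := L * α * Real.sqrt n / 2 with hR
  have hRpos : 0 < R := by positivity
  -- key convexity inequality: f x - f xstar ≤ ⟪g, x - xstar⟫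
  have hkey : f x - f xstar ≤ ⟪g, x - xstar⟫ := by
    by_cases hxx : x = xstar
    · simp [hxx]
    set d : EuclideanSpace ℝ (Fin n) := xstar - x with hd
    set γ : ℝ → EuclideanSpace ℝ (Fin n) := fun t => x + t • d with hγ
    have hder : ∀ t : ℝ, HasDerivAt (fun t => f (γ t)) (⟪gradient f (γ t), d⟫) t := by
      intro t
      have h1 : HasDerivAt γ d t := by
        have : HasDerivAt (fun t : ℝ => t • d) ((1:ℝ) • d) t :=
          (hasDerivAt_id t).smul_const d
        have := this.const_add x; rw [one_smul] at this; exact this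
      have h2 := (hdiff (γ t)).hasFDerivAt.comp_hasDerivAt t h1
      rw [hfd] at h2; exact h2
    obtain ⟨c, hc, hslope⟩ := exists_hasDerivAt_eq_slope (fun t => f (γ t))
      (fun t => ⟪gradient f (γ t), d⟫) one_pos
      (fun t _ => (hder t).continuousAt.continuousWithinAt) (fun t _ => hder t)
    have hγ0 : γ 0 = x := by simp [hγ]
    have hγ1 : γ 1 = xstar := by simp [hγ, hd]
    have hcpos : 0 < c := hc.1
    have hmono : ⟪gradient f (γ c) - gradient f x, γ c - x⟫ ≥ μ * ‖γ c - x‖ ^ 2 :=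
      hconv (γ c) x
    have hγcx : γ c - x = c • d := by simp [hγ]
    have hineq : ⟪gradient f x, d⟫ ≤ ⟪gradient f (γ c), d⟫ := by
      have h1 : c * ⟪gradient f (γ c) - gradient f x, d⟫ ≥ 0 := by
        have := hmono
        rw [hγcx] at this
        have h2 : ⟪gradient f (γ c) - gradient f x, c • d⟫
            = c * ⟪gradient f (γ c) - gradient f x, d⟫ := real_inner_smul_right _ _ _
        nlinarith [sq_nonneg ‖c • d‖, mul_nonneg hμ.le (sq_nonneg ‖c • d‖)]
      have h3 : 0 ≤ ⟪gradient f (γ c) - gradient f x, d⟫ := nonneg_of_mul_nonneg_right h1 hcpos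
      have h4 : ⟪gradient f (γ c) - gradient f x, d⟫
          = ⟪gradient f (γ c), d⟫ - ⟪gradient f x, d⟫ := inner_sub_left _ _ _
      linarith
    have hslope' : ⟪gradient f (γ c), d⟫ = f xstar - f x := by
      rw [hslope]; simp [hγ0, hγ1]
    have : ⟪g, d⟫ ≤ f xstar - f x := by rw [← hslope']; exact hineq
    have hgd : ⟪g, x - xstar⟫ = -⟪g, d⟫ := by
      rw [hd, ← inner_neg_right]; congr 1; abel
    linarith [hgd ▸ neg_le_neg this]
  have hmono := hconv x xstar
  rw [hgrad0, sub_zero] at hmono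
  have hCS : ⟪g, x - xstar⟫ ≤ ‖g‖ * ‖x - xstar‖ := real_inner_le_norm _ _
  have h1 : ε < ‖g‖ * ‖x - xstar‖ := by linarith
  have h2 : μ * ‖x - xstar‖ ^ 2 ≤ ‖g‖ * ‖x - xstar‖ := le_trans hmono hCS
  have hR2 : R ^ 2 < ε * μ := by
    have hRe : R ^ 2 = L ^ 2 * α ^ 2 * n / 4 := by
      rw [hR, div_pow, mul_pow, mul_pow, hsqn2]; norm_num
    rw [hRe]; linarith
  exact stmt_12_aux ‖g‖ ‖x - xstar‖ R μ ε (norm_nonneg _) hμ hRpos hε h1 h2 hR2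
end

section
/- Define f : ℝⁿ → ℝ by f(x) = Σ_{i=1}^n (xᵢ − α/2)². Then f is 2-strongly convex, ∇f is 2-Lipschitz, the unique minimizer is x* = (α/2, …, α/2), and at the lattice point x = 0 one has ‖∇f(0)‖₂ = α√n = (Lα√n)/2 with L = 2, and ‖0 − x*‖₂ = α√n/2 = (Lα√n)/(2μ) with μ = 2. Moreover every point of S = {x ∈ {0, α}ⁿ} satisfies f(x) = nα²/4 = f(0). -/
open scoped RealInnerProductSpace

theorem stmt_15 (n : ℕ) (α : ℝ) (hα : 0 < α)
    (f : EuclideanSpace ℝ (Fin n) → ℝ)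
    (hf : f = fun x => ∑ i, (x i - α / 2) ^ 2)
    (xstar : EuclideanSpace ℝ (Fin n)) (hxstar : ∀ i, xstar i = α / 2) :
    (∀ x y : EuclideanSpace ℝ (Fin n),
        ⟪gradient f x - gradient f y, x - y⟫ ≥ 2 * ‖x - y‖ ^ 2) ∧
    (∀ x y : EuclideanSpace ℝ (Fin n),
        ‖gradient f x - gradient f y‖ ≤ 2 * ‖x - y‖) ∧
    (∀ x : EuclideanSpace ℝ (Fin n), x ≠ xstar → f xstar < f x) ∧
    ‖gradient f 0‖ = α * Real.sqrt n ∧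
    α * Real.sqrt n = 2 * α * Real.sqrt n / 2 ∧
    ‖(0 : EuclideanSpace ℝ (Fin n)) - xstar‖ = α * Real.sqrt n / 2 ∧
    α * Real.sqrt n / 2 = 2 * α * Real.sqrt n / (2 * 2) ∧
    (∀ x : EuclideanSpace ℝ (Fin n), (∀ i, x i = 0 ∨ x i = α) →
        f x = n * α ^ 2 / 4) ∧
    f 0 = n * α ^ 2 / 4 := by
  -- f equals the inner-product form
  have hfe : f = fun y : EuclideanSpace ℝ (Fin n) => ⟪y - xstar, y - xstar⟫ := by
    rw [hf]; funext y
    simp only [PiLp.inner_apply, PiLp.sub_apply, RCLike.inner_apply, conj_trivial, hxstar]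
    exact Finset.sum_congr rfl fun i _ => by ring
  have hgrad : ∀ x : EuclideanSpace ℝ (Fin n),
      gradient f x = (2 : ℝ) • (x - xstar) := by
    intro x
    have h1 : HasFDerivAt (fun y : EuclideanSpace ℝ (Fin n) => y - xstar)
        (ContinuousLinearMap.id ℝ _) x :=
      (hasFDerivAt_id x).sub_const xstar
    have h2 := h1.inner ℝ h1
    have h3 : HasGradientAt f ((2 : ℝ) • (x - xstar)) x := by
      rw [hasGradientAt_iff_hasFDerivAt, hfe]
      refine h2.congr_fderiv (Eq.symm ?_)
      ext v
      simp [fderivInnerCLM_apply, real_inner_comm, InnerProductSpace.toDual_apply_apply,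
        inner_smul_left, two_mul]
      have hc : ∑ j, v j * (x j - xstar j)
          = (∑ j, x j * v j) - ∑ j, xstar j * v j := by
        rw [← Finset.sum_sub_distrib]
        exact Finset.sum_congr rfl fun j _ => by ring
      have hc2 : ∑ j, (x j - xstar j) * v j
          = (∑ j, x j * v j) - ∑ j, xstar j * v j := by
        rw [← Finset.sum_sub_distrib]
        exact Finset.sum_congr rfl fun j _ => by ring
      rw [inner_sub_right, real_inner_comm x v, real_inner_comm xstar v]
    exact h3.gradient
  have hnorm_xstar : ‖xstar‖ = α * Real.sqrt n / 2 := by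
    rw [EuclideanSpace.norm_eq]
    simp only [hxstar, Real.norm_eq_abs, Finset.sum_const, Finset.card_univ, Fintype.card_fin,
      nsmul_eq_mul, sq_abs]
    rw [show (n : ℝ) * (α / 2) ^ 2 = ((Real.sqrt n * (α / 2)) ^ 2) by
      rw [mul_pow, Real.sq_sqrt (Nat.cast_nonneg n)]]
    rw [Real.sqrt_sq (by positivity)]
    ring
  refine ⟨?_, ?_, ?_, ?_, by ring, ?_, by ring, ?_, ?_⟩
  · intro x y
    rw [hgrad, hgrad, show (2:ℝ) • (x - xstar) - (2:ℝ) • (y - xstar) = (2:ℝ) • (x - y) by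
      module]
    rw [inner_smul_left, real_inner_self_eq_norm_sq]
    norm_num
  · intro x y
    rw [hgrad, hgrad, show (2:ℝ) • (x - xstar) - (2:ℝ) • (y - xstar) = (2:ℝ) • (x - y) by
      module]
    rw [norm_smul]
    simp
  · intro x hx
    rw [hf]
    have h0 : ∑ i, ((xstar : EuclideanSpace ℝ (Fin n)) i - α / 2) ^ 2 = 0 := by
      simp [hxstar]
    simp only [h0]
    have hne2 : ¬ ∀ i, x i = xstar i := fun h => hx (PiLp.ext h)
    push_neg at hne2; obtain ⟨i, hi⟩ := hne2
    rw [hxstar i] at hi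
    have hne : x i - α / 2 ≠ 0 := fun h => hi (by linarith)
    calc (0:ℝ) < (x i - α/2)^2 := by positivity
      _ ≤ ∑ j, (x j - α/2)^2 :=
        Finset.single_le_sum (f := fun j => (x j - α/2)^2) (fun j _ => sq_nonneg _) (Finset.mem_univ i)
  · rw [hgrad, zero_sub, norm_smul, norm_neg, hnorm_xstar]
    simp
    ring
  · rw [zero_sub, norm_neg, hnorm_xstar]
  · intro x hx
    rw [hf]
    have h : ∀ i, (x i - α / 2) ^ 2 = α ^ 2 / 4 := by
      intro i; rcases hx i with h | h <;> rw [h] <;> ring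
    simp [h]
    ring
  · rw [hf]
    have h : ∀ i : Fin n, ((0 : EuclideanSpace ℝ (Fin n)) i - α / 2) ^ 2 = α ^ 2 / 4 := by
      intro i; simp; ring
    simp only [h, Finset.sum_const, Finset.card_univ, Fintype.card_fin, nsmul_eq_mul]
    ring
end
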